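/- arXiv:2401.13597 — 2 statements merged into one kernel-verified Lean document; each statement's English description precedes it below -/
import Mathlib

section
/- For every maximally-consistent base B: (i) ⊮_B ⊥; and (ii) for all classical formulas φ and ψ, ⊩_B φ→ψ if and only if ⊮_B φ or ⊩_B ψ. -/
/-- A base rule: a pair of a finite set of premiss atoms and a conclusion atom. -/
structure BaseRule (At : Type) where
  prem : Finset At
  concl : At

/-- A base is a set of base rules. -/
abbrev Base (At : Type) := Set (BaseRule At)

/-- The closure of a base `B`: the least set of atoms closed under the rules of `B`. -/
inductive Closure {At : Type} (B : Base At) : At → Prop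
  | step (r : BaseRule At) (hr : r ∈ B) (ih : ∀ q ∈ r.prem, Closure B q) :
      Closure B r.concl

/-- Classical formulas: atoms, falsum and implication. -/
inductive CForm (At : Type) where
  | atom : At → CForm At
  | bot  : CForm At
  | imp  : CForm At → CForm At → CForm At

/-- Base-extension validity of a classical formula at a base. -/
def CValid {At : Type} : Base At → CForm At → Prop
  | B, .atom p  => Closure B p
  | B, .bot     => ∀ p : At, Closure B p
  | B, .imp φ ψ => ∀ C : Base At, B ⊆ C → CValid C φ → CValid C ψ

/-- Base-extension consequence: `Γ ⊩_B φ`. -/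
def CCon {At : Type} (Γ : Set (CForm At)) (B : Base At) (φ : CForm At) : Prop :=
  ∀ C : Base At, B ⊆ C → (∀ ψ ∈ Γ, CValid C ψ) → CValid C φ

/-- A base is inconsistent iff `⊥` is valid at it. -/
def CInconsistent {At : Type} (B : Base At) : Prop := CValid B CForm.bot

/-- A base is consistent iff it is not inconsistent. -/
def CConsistent {At : Type} (B : Base At) : Prop := ¬ CInconsistent B

/-- A base is maximally-consistent iff it is consistent and adding any missing
base rule makes it inconsistent. -/
def CMaxCon {At : Type} (B : Base At) : Prop :=
  CConsistent B ∧ ∀ δ : BaseRule At, δ ∈ B ∨ CInconsistent (insert δ B)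

lemma Closure.mono {At : Type} {B C : Base At} (h : B ⊆ C) {p : At}
    (hp : Closure B p) : Closure C p := by
  induction hp with
  | step r hr ih ih2 => exact .step r (h hr) ih2

lemma cvalid_of_full {At : Type} {C : Base At} (hC : ∀ p, Closure C p)
    (φ : CForm At) : CValid C φ := by
  induction φ generalizing C with
  | atom p => exact hC p
  | bot => exact hC
  | imp φ ψ ihφ ihψ =>
    intro D hD _
    exact ihψ (fun p => (hC p).mono hD)

/-- behaviour of ⊥ and → at maximally-consistent bases. -/
theorem classical_behaviour_at_maxcon {At : Type} [Countable At] [Infinite At]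
    (B : Base At) (hB : CMaxCon B) :
    ¬ CValid B CForm.bot ∧
      ∀ φ ψ : CForm At,
        CValid B (CForm.imp φ ψ) ↔ (¬ CValid B φ ∨ CValid B ψ) := by
  refine ⟨hB.1, fun φ ψ => ⟨fun h => ?_, fun h => ?_⟩⟩
  · by_cases hφ : CValid B φ
    · exact Or.inr (h B (subset_refl B) hφ)
    · exact Or.inl hφ
  · intro C hBC hφ
    by_cases hCB : C ⊆ B
    · have : C = B := le_antisymm hCB hBC
      subst this
      rcases h with h | h
      · exact absurd hφ h
      · exact h
    · obtain ⟨δ, hδC, hδB⟩ := Set.not_subset.mp hCB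
      have hinc : CInconsistent (insert δ B) := (hB.2 δ).resolve_left hδB
      have hfull : ∀ p, Closure C p := fun p =>
        (hinc p).mono (Set.insert_subset hδC hBC)
      exact cvalid_of_full hfull ψ
end

section
/- For every classical formula φ and every base B such that ⊮_B φ, there exists a maximally-consistent base B* with B ⊆ B* and ⊮_{B*} φ. -/
/- auxiliary -/
namespace MCXaux

variable {At : Type}

theorem closure_mono {B C : Base At} (h : B ⊆ C) {p : At} (hp : Closure B p) :
    Closure C p := by
  induction hp with
  | step r hr ih ih2 => exact Closure.step r (h hr) ih2

theorem cvalid_mono {B C : Base At} (h : B ⊆ C) (φ : CForm At)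
    (hv : CValid B φ) : CValid C φ := by
  cases φ with
  | atom p => exact closure_mono h hv
  | bot => exact fun p => closure_mono h (hv p)
  | imp φ ψ => exact fun D hD hφ => hv D (h.trans hD) hφ

theorem incon_mono {B C : Base At} (h : B ⊆ C) (hi : CInconsistent B) :
    CInconsistent C := fun p => closure_mono h (hi p)

theorem valid_of_incon (φ : CForm At) :
    ∀ C : Base At, CInconsistent C → CValid C φ := by
  induction φ with
  | atom p => exact fun C hi => hi p
  | bot => exact fun C hi => hi
  | imp φ ψ ihφ ihψ => exact fun C hi D hD _ => ihψ D (incon_mono hD hi)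

/-- Classical evaluation under a set of atoms. -/
def eval (S : Set At) : CForm At → Prop
  | .atom p => p ∈ S
  | .bot => False
  | .imp φ ψ => eval S φ → eval S ψ

/-- `S` is closed under the rules of `B`. -/
def closedUnder (B : Base At) (S : Set At) : Prop :=
  ∀ δ ∈ B, (↑δ.prem : Set At) ⊆ S → δ.concl ∈ S

/-- Canonical maximal base for a set `S`. -/
def Bmax (S : Set At) : Base At := {δ | δ.concl ∈ S ∨ ¬ (↑δ.prem : Set At) ⊆ S}

theorem closure_Bmax {S : Set At} {p : At} : Closure (Bmax S) p ↔ p ∈ S := by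
  constructor
  · intro h
    induction h with
    | step r hr ih ih2 =>
      rcases hr with h | h
      · exact h
      · exact absurd (fun q hq => ih2 q hq) h
  · intro hp
    exact Closure.step ⟨∅, p⟩ (Or.inl hp) (by simp)

theorem closedUnder_Bmax (S : Set At) : closedUnder (Bmax S) S := by
  intro δ hδ hprem
  rcases hδ with h | h
  · exact h
  · exact absurd hprem h

theorem incon_insert {S : Set At} {δ : BaseRule At} (hδ : δ ∉ Bmax S) :
    CInconsistent (insert δ (Bmax S)) := by
  simp only [Bmax, Set.mem_setOf_eq, not_or, not_not] at hδ
  obtain ⟨hc, hp⟩ := hδ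
  have hconcl : Closure (insert δ (Bmax S)) δ.concl := by
    refine Closure.step δ (Set.mem_insert _ _) ?_
    intro q hq
    exact closure_mono (Set.subset_insert _ _) (closure_Bmax.mpr (hp hq))
  intro p
  refine Closure.step ⟨{δ.concl}, p⟩ ?_ ?_
  · refine Set.mem_insert_of_mem _ (Or.inr ?_)
    intro hsub
    exact hc (hsub (by simp))
  · intro q hq
    simp only [Finset.mem_singleton] at hq
    subst hq; exact hconcl

theorem valid_Bmax {S : Set At} (hS : ∃ a, a ∉ S) (φ : CForm At) :
    CValid (Bmax S) φ ↔ eval S φ := by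
  induction φ with
  | atom p => exact closure_Bmax
  | bot =>
    constructor
    · intro h
      obtain ⟨a, ha⟩ := hS
      exact ha (closure_Bmax.mp (h a))
    · intro h; exact h.elim
  | imp φ ψ ihφ ihψ =>
    constructor
    · intro h hφ
      exact ihψ.mp (h (Bmax S) subset_rfl (ihφ.mpr hφ))
    · intro h D hD hφD
      by_cases hcase : ∃ δ ∈ D, δ ∉ Bmax S
      · obtain ⟨δ, hδD, hδ⟩ := hcase
        refine valid_of_incon ψ D (incon_mono ?_ (incon_insert hδ))
        exact Set.insert_subset hδD hD
      · push_neg at hcase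
        have hDeq : D = Bmax S := Set.Subset.antisymm hcase hD
        subst hDeq
        exact ihψ.mpr (h (ihφ.mp hφD))

theorem subset_Bmax {C : Base At} {S : Set At} (h : closedUnder C S) :
    C ⊆ Bmax S := by
  intro δ hδ
  by_cases hp : (↑δ.prem : Set At) ⊆ S
  · exact Or.inl (h δ hδ hp)
  · exact Or.inr hp

theorem main_lemma (φ : CForm At) :
    ∀ C : Base At,
      (∀ S : Set At, closedUnder C S → (∃ a, a ∉ S) → eval S φ) → CValid C φ := by
  induction φ with
  | atom p =>
    intro C hyp
    by_cases hS : ∃ a, a ∉ {q | Closure C q}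
    · have hcl : closedUnder C {q | Closure C q} := by
        intro δ hδ hprem
        exact Closure.step δ hδ fun q hq => hprem hq
      exact hyp _ hcl hS
    · push_neg at hS
      exact hS p
  | bot =>
    intro C hyp p
    by_cases hS : ∃ a, a ∉ {q | Closure C q}
    · have hcl : closedUnder C {q | Closure C q} := by
        intro δ hδ hprem
        exact Closure.step δ hδ fun q hq => hprem hq
      exact absurd (hyp _ hcl hS) (fun h => h)
    · push_neg at hS
      exact hS p
  | imp φ ψ ihφ ihψ =>
    intro C hyp D hCD hφD
    refine ihψ D ?_
    intro S hSclosed hSproper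
    have hDmax : D ⊆ Bmax S := subset_Bmax hSclosed
    have hφS : eval S φ := (valid_Bmax hSproper φ).mp (cvalid_mono hDmax φ hφD)
    have hCclosed : closedUnder C S := fun δ hδ => hSclosed δ (hCD hδ)
    exact hyp S hCclosed hSproper hφS

end MCXaux

/-- maximally-consistent extension preserving non-validity. -/
theorem classical_maxcon_extension {At : Type} [Countable At] [Infinite At]
    (φ : CForm At) (B : Base At) (h : ¬ CValid B φ) :
    ∃ Bstar : Base At, CMaxCon Bstar ∧ B ⊆ Bstar ∧ ¬ CValid Bstar φ := by
  open MCXaux in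
  by_contra hcon
  apply h
  apply MCXaux.main_lemma φ B
  intro S hclosed hproper
  by_contra heval
  apply hcon
  refine ⟨MCXaux.Bmax S, ⟨?_, ?_⟩, MCXaux.subset_Bmax hclosed, ?_⟩
  · intro hinc
    exact heval (((MCXaux.valid_Bmax hproper CForm.bot).mp hinc).elim)
  · intro δ
    by_cases hδ : δ ∈ MCXaux.Bmax S
    · exact Or.inl hδ
    · exact Or.inr (MCXaux.incon_insert hδ)
  · intro hv
    exact heval ((MCXaux.valid_Bmax hproper φ).mp hv)
end
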